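/- Let n ≥ 6 be even and let P_even be the pot over bond-edge types a_1, …, a_{n/2+1} consisting of the n/2+2 tiles t_1 = {a_1^{n-1}}, t_2 = {â_1, a_2, a_2}, t_i = {â_1, â_{i-1}, a_i} for 3 ≤ i ≤ n/2+1, and t_{n/2+2} = {â_1, â_{n/2}, â_{n/2+1}}. Then the construction matrix M(P_even) has the unique solution (1/n, 1/n, 2/n, …, 2/n, 1/n, 1/n), where the entry 2/n occurs in coordinates 3 through n/2, and consequently m_{P_even} = n. -/

import Mathlib

/-!
Basic framework for flexible-tile DNA self-assembly.

Bond-edge types are elements of `Fin m`.  A cohesive end is either unhatted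
(`Sum.inl a`) or hatted (`Sum.inr a`).  A tile is a finite multiset of cohesive
ends, and a pot is a finite set of tiles.
-/

/-- A tile over the bond-edge alphabet `Fin m`. -/
abbrev Tile (m : ℕ) : Type := Multiset (Fin m ⊕ Fin m)

/-- A pot: a finite set of tiles over the alphabet `Fin m`. -/
abbrev Pot (m : ℕ) : Type := Finset (Tile m)

/-- A finite multigraph (nonempty finite vertex set, finite edge set; loops and
parallel edges allowed), edges recorded by their unordered pair of endpoints. -/
structure Multigraph where
  V : Type
  E : Type
  [fintypeV : Fintype V]
  [decEqV : DecidableEq V]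
  [nonemptyV : Nonempty V]
  [fintypeE : Fintype E]
  ends : E → Sym2 V

attribute [instance] Multigraph.fintypeV Multigraph.decEqV
  Multigraph.nonemptyV Multigraph.fintypeE

/-- The order (number of vertices) of a multigraph. -/
def Multigraph.order (G : Multigraph) : ℕ := Fintype.card G.V

/-- An assembly of `G` from tiles over `Fin m`: each edge gets an orientation
(an ordered pair of vertices compatible with its endpoints) and a bond-edge type. -/
structure Assembly (m : ℕ) (G : Multigraph) where
  orient : G.E → G.V × G.V
  label : G.E → Fin m
  orient_ends : ∀ e : G.E, G.ends e = s((orient e).1, (orient e).2)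

/-- The tile of a vertex `v` under an assembly: one unhatted `a` for each edge
labeled `a` oriented out of `v`, one hatted `a` for each edge labeled `a`
oriented into `v`. -/
def Assembly.tileOf {m : ℕ} {G : Multigraph} (A : Assembly m G) (v : G.V) : Tile m :=
  (Finset.univ : Finset G.E).val.bind fun e =>
    (if (A.orient e).1 = v then {Sum.inl (A.label e)} else 0) +
    (if (A.orient e).2 = v then {Sum.inr (A.label e)} else 0)

/-- `G` is realized by the pot `P`: there is an assembly of `G` all of whose
vertex tiles belong to `P`. -/
def Realizes {m : ℕ} (P : Pot m) (G : Multigraph) : Prop :=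
  ∃ A : Assembly m G, ∀ v : G.V, A.tileOf v ∈ P

/-- `C(P)`: the class of multigraphs realized by `P`. -/
def CSet {m : ℕ} (P : Pot m) : Set Multigraph := {G | Realizes P G}

/-- `m_P`: the minimum order of a multigraph realized by `P`. -/
noncomputable def mP {m : ℕ} (P : Pot m) : ℕ :=
  sInf {n | ∃ G ∈ CSet P, G.order = n}

/-- `C_min(P)`: the multigraphs realized by `P` of minimum order. -/
def Cmin {m : ℕ} (P : Pot m) : Set Multigraph :=
  {G ∈ CSet P | G.order = mP P}

/-- An isomorphism of multigraphs. -/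
structure MultigraphIso (G H : Multigraph) where
  vEquiv : G.V ≃ H.V
  eEquiv : G.E ≃ H.E
  ends_eq : ∀ e : G.E, H.ends (eEquiv e) = (G.ends e).map vEquiv

/-- Two multigraphs are isomorphic. -/
def Isomorphic (G H : Multigraph) : Prop := Nonempty (MultigraphIso G H)

/-- Scenario 1: minimum number of tile types over all pots realizing `G`. -/
noncomputable def T1 (G : Multigraph) : ℕ :=
  sInf {c | ∃ m : ℕ, ∃ P : Pot m, Realizes P G ∧ P.card = c}

/-- Scenario 1: minimum number of bond-edge types over all pots realizing `G`. -/
noncomputable def B1 (G : Multigraph) : ℕ :=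
  sInf {m | ∃ P : Pot m, Realizes P G}

/-- Scenario 2: minimum number of tile types over pots `P` with `G ∈ C(P)` and
`m_P = |V(G)|`. -/
noncomputable def T2 (G : Multigraph) : ℕ :=
  sInf {c | ∃ m : ℕ, ∃ P : Pot m, Realizes P G ∧ mP P = G.order ∧ P.card = c}

/-- Scenario 2: minimum number of bond-edge types over pots `P` with `G ∈ C(P)`
and `m_P = |V(G)|`. -/
noncomputable def B2 (G : Multigraph) : ℕ :=
  sInf {m | ∃ P : Pot m, Realizes P G ∧ mP P = G.order}

/-- Scenario 3: minimum number of tile types over pots `P` with `C_min(P)`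
consisting exactly of the multigraphs isomorphic to `G`. -/
noncomputable def T3 (G : Multigraph) : ℕ :=
  sInf {c | ∃ m : ℕ, ∃ P : Pot m, Cmin P = {H | Isomorphic H G} ∧ P.card = c}

/-- Scenario 3: minimum number of bond-edge types over pots `P` with `C_min(P)`
consisting exactly of the multigraphs isomorphic to `G`. -/
noncomputable def B3 (G : Multigraph) : ℕ :=
  sInf {m | ∃ P : Pot m, Cmin P = {H | Isomorphic H G}}

/-- The degree of a vertex (a loop contributes 2). -/
def Multigraph.degree (G : Multigraph) (v : G.V) : ℕ :=
  ∑ e : G.E, (if v ∈ G.ends e then (if (G.ends e).IsDiag then 2 else 1) else 0)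

/-- `av(G)`: the number of distinct vertex degrees in `G`. -/
def av (G : Multigraph) : ℕ := (Finset.univ.image G.degree).card

/-- `ev(G)`: the number of distinct even vertex degrees in `G`. -/
def ev (G : Multigraph) : ℕ :=
  ((Finset.univ.image G.degree).filter (fun d => Even d)).card

/-- `ov(G)`: the number of distinct odd vertex degrees in `G`. -/
def ov (G : Multigraph) : ℕ :=
  ((Finset.univ.image G.degree).filter (fun d => Odd d)).card

/-- `z i t`: the net number of cohesive ends of type `i` on tile `t`
(unhatted count minus hatted count). -/
def zval {m : ℕ} (i : Fin m) (t : Tile m) : ℤ :=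
  (t.count (Sum.inl i) : ℤ) - (t.count (Sum.inr i) : ℤ)

/-- The wheel graph on `n` vertices: the hub is `none`; the outer-cycle
vertices are `some i` for `i : Fin (n-1)`.  Edge `Sum.inl i` is the spoke from
the hub to `some i`; edge `Sum.inr i` is the outer-cycle edge from `some i` to
`some ((i+1) mod (n-1))`. -/
def wheel (n : ℕ) : Multigraph where
  V := Option (Fin (n - 1))
  E := Fin (n - 1) ⊕ Fin (n - 1)
  ends e :=
    match e with
    | Sum.inl i => s((none : Option (Fin (n - 1))), some i)
    | Sum.inr i => s(some i,
        some ⟨(i.val + 1) % (n - 1), Nat.mod_lt _ (by have := i.isLt; omega)⟩)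

/-- The cycle graph on `n` vertices (vertices `none, some 0, …, some (n-2)`,
edge `k` joining the `k`-th and `(k+1 mod n)`-th vertices in this order). -/
def cycleVtx (n : ℕ) (k : Fin n) : Option (Fin (n - 1)) :=
  if h : k.val = 0 then none else some ⟨k.val - 1, by have := k.isLt; omega⟩

def cycleGraph (n : ℕ) : Multigraph where
  V := Option (Fin (n - 1))
  E := Fin n
  ends k := s(cycleVtx n k,
    cycleVtx n ⟨(k.val + 1) % n, Nat.mod_lt _ (by have := k.isLt; omega)⟩)
section Helpers

lemma sum_val_ite {N : ℕ} (f : Fin N → ℚ) (m : ℕ) (hm : m < N) :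
    (∑ j : Fin N, if j.val = m then f j else 0) = f ⟨m, hm⟩ := by
  rw [Finset.sum_eq_single (⟨m, hm⟩ : Fin N)]
  · simp
  · intro b _ hb
    rw [if_neg]
    intro h; exact hb (Fin.ext h)
  · simp

lemma sum_shape (k : ℕ) (hk : 3 ≤ k) (x y : ℚ) :
    (∑ j : Fin (k+2), if 2 ≤ j.val ∧ j.val ≤ k - 1 then x else y)
      = (k - 2 : ℕ) * x + 4 * y := by
  rw [Fin.sum_univ_eq_sum_range (fun j => if 2 ≤ j ∧ j ≤ k - 1 then x else y) (k+2)]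
  rw [Finset.sum_ite, Finset.sum_const, Finset.sum_const]
  have h1 : (Finset.range (k+2)).filter (fun j => 2 ≤ j ∧ j ≤ k-1) = Finset.Ico 2 k := by
    ext j; simp [Finset.mem_Ico]; omega
  have h2 : (Finset.range (k+2)).filter (fun j => ¬(2 ≤ j ∧ j ≤ k-1))
      = ({0, 1, k, k+1} : Finset ℕ) := by
    ext j; simp; omega
  rw [h1, h2, Nat.card_Ico]
  have h4 : ({0, 1, k, k+1} : Finset ℕ).card = 4 := by
    rw [Finset.card_insert_of_notMem (by intro h; simp only [Finset.mem_insert, Finset.mem_singleton] at h; omega),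
        Finset.card_insert_of_notMem (by intro h; simp only [Finset.mem_insert, Finset.mem_singleton] at h; omega),
        Finset.card_insert_of_notMem (by intro h; simp only [Finset.mem_insert, Finset.mem_singleton] at h; omega),
        Finset.card_singleton]
  rw [h4]
  simp [nsmul_eq_mul]

end Helpers

section Part1

lemma zval_t {n k : ℕ} (hk : 3 ≤ k) (hnk : n = 2 * k)
    {t : Fin (k + 2) → Tile (k + 1)}
    (ht0 : t 0 = Multiset.replicate (n - 1) (Sum.inl ⟨0, by lia⟩))
    (ht1 : t 1 = ({Sum.inr ⟨0, by lia⟩, Sum.inl ⟨1, by lia⟩,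
      Sum.inl ⟨1, by lia⟩} : Tile (k + 1)))
    (hti : ∀ (j : Fin (k + 2)) (h2 : 2 ≤ j.val) (hjk : j.val ≤ k),
      t j = ({Sum.inr ⟨0, by lia⟩,
        Sum.inr ⟨j.val - 1, by have := j.isLt; lia⟩,
        Sum.inl ⟨j.val, by have := hjk; lia⟩} : Tile (k + 1)))
    (htlast : t ⟨k + 1, by lia⟩ = ({Sum.inr ⟨0, by lia⟩,
      Sum.inr ⟨k - 1, by lia⟩, Sum.inr ⟨k, by lia⟩} : Tile (k + 1)))
    (i : Fin (k + 1)) (j : Fin (k + 2)) :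
    zval i (t j) =
      if j.val = 0 then (if i.val = 0 then (2 * k - 1 : ℤ) else 0)
      else (if i.val = 0 then -1 else 0)
        + (if i.val = j.val then (if j.val = 1 then 2 else 1) else 0)
        - (if (i.val = j.val - 1 ∧ 2 ≤ j.val ∧ j.val ≤ k) ∨
             (j.val = k + 1 ∧ (i.val = k - 1 ∨ i.val = k)) then 1 else 0) := by
  obtain ⟨jv, hj⟩ := j
  have hiv := i.isLt
  rcases Nat.lt_or_ge jv 2 with h2 | h2
  · interval_cases jv
    · have e : t ⟨0, hj⟩ = Multiset.replicate (n - 1)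
          (Sum.inl (⟨0, by omega⟩ : Fin (k+1)) : Fin (k+1) ⊕ Fin (k+1)) := by
        rw [show (⟨0, hj⟩ : Fin (k+2)) = 0 from rfl]; exact ht0
      rw [e]
      simp only [zval, Multiset.count_replicate, Fin.val_mk, reduceCtorEq,
        Sum.inl.injEq, Fin.ext_iff, if_false]
      split_ifs <;> omega
    · have e : t ⟨1, hj⟩ = ({Sum.inr ⟨0, by omega⟩, Sum.inl ⟨1, by omega⟩,
          Sum.inl ⟨1, by omega⟩} : Tile (k + 1)) := by
        rw [show (⟨1, hj⟩ : Fin (k+2)) = 1 from rfl]; exact ht1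
      rw [e]
      simp only [zval, Multiset.insert_eq_cons, Multiset.count_cons,
        Multiset.count_singleton, Sum.inl.injEq, Sum.inr.injEq, reduceCtorEq,
        Fin.ext_iff, Fin.val_mk, if_false, true_and, and_true]
      split_ifs <;> omega
  · rcases Nat.lt_or_ge jv (k+1) with h3 | h3
    · rw [hti ⟨jv, hj⟩ h2 (by show jv ≤ k; omega)]
      simp only [zval, Multiset.insert_eq_cons, Multiset.count_cons,
        Multiset.count_singleton, Sum.inl.injEq, Sum.inr.injEq, reduceCtorEq,
        Fin.ext_iff, Fin.val_mk, if_false, true_and, and_true]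
      split_ifs <;> omega
    · have hjv : jv = k + 1 := by omega
      subst hjv
      have e : t ⟨k+1, hj⟩ = ({Sum.inr ⟨0, by omega⟩,
          Sum.inr ⟨k - 1, by omega⟩, Sum.inr ⟨k, by omega⟩} : Tile (k + 1)) := htlast
      rw [e]
      simp only [zval, Multiset.insert_eq_cons, Multiset.count_cons,
        Multiset.count_singleton, Sum.inl.injEq, Sum.inr.injEq, reduceCtorEq,
        Fin.ext_iff, Fin.val_mk, if_false, true_and, and_true]
      split_ifs <;> omega

end Part1
section Part1b

set_option maxHeartbeats 1000000 in
lemma part1 {n k : ℕ} (hk : 3 ≤ k) (hnk : n = 2 * k)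
    {t : Fin (k + 2) → Tile (k + 1)}
    (ht0 : t 0 = Multiset.replicate (n - 1) (Sum.inl ⟨0, by lia⟩))
    (ht1 : t 1 = ({Sum.inr ⟨0, by lia⟩, Sum.inl ⟨1, by lia⟩,
      Sum.inl ⟨1, by lia⟩} : Tile (k + 1)))
    (hti : ∀ (j : Fin (k + 2)) (h2 : 2 ≤ j.val) (hjk : j.val ≤ k),
      t j = ({Sum.inr ⟨0, by lia⟩,
        Sum.inr ⟨j.val - 1, by have := j.isLt; lia⟩,
        Sum.inl ⟨j.val, by have := hjk; lia⟩} : Tile (k + 1)))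
    (htlast : t ⟨k + 1, by lia⟩ = ({Sum.inr ⟨0, by lia⟩,
      Sum.inr ⟨k - 1, by lia⟩, Sum.inr ⟨k, by lia⟩} : Tile (k + 1)))
    (r : Fin (k + 2) → ℚ) :
    ((∀ i : Fin (k + 1), ∑ j, r j * (zval i (t j) : ℚ) = 0) ∧ ∑ j, r j = 1) ↔
      ∀ j : Fin (k + 2), r j =
        if 2 ≤ j.val ∧ j.val ≤ k - 1 then 2 / (n : ℚ) else 1 / (n : ℚ) := by
  set s : ℕ → ℚ := fun m => if h : m < k + 2 then r ⟨m, h⟩ else 0 with hs_def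
  have hsr : ∀ (m : ℕ) (h : m < k + 2), r ⟨m, h⟩ = s m := by
    intro m h
    simp only [hs_def]
    rw [dif_pos h]
  have hq : ∀ (i : Fin (k+1)) (j : Fin (k+2)), (zval i (t j) : ℚ) =
      if j.val = 0 then (if i.val = 0 then (2 * k - 1 : ℚ) else 0)
      else (if i.val = 0 then -1 else 0)
        + (if i.val = j.val then (if j.val = 1 then 2 else 1) else 0)
        - (if (i.val = j.val - 1 ∧ 2 ≤ j.val ∧ j.val ≤ k) ∨
             (j.val = k + 1 ∧ (i.val = k - 1 ∨ i.val = k)) then 1 else 0) := by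
    intro i j
    rw [zval_t hk hnk ht0 ht1 hti htlast i j]
    split_ifs <;> push_cast <;> ring
  have E0 : ∑ j, r j * (zval (⟨0, by omega⟩ : Fin (k+1)) (t j) : ℚ)
      = 2*k*(s 0) - ∑ j, r j := by
    have hpt : ∀ j : Fin (k+2), r j * (zval (⟨0, by omega⟩ : Fin (k+1)) (t j) : ℚ)
        = 2*(k:ℚ)*(if j.val = 0 then r j else 0) - r j := by
      intro j; rw [hq]; obtain ⟨jv, hj⟩ := j
      simp only [Fin.val_mk, eq_self_iff_true, true_or, or_true, true_and, and_true]
      split_ifs <;> first | ring1 | (exfalso; omega)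
    rw [Finset.sum_congr rfl (fun j _ => hpt j), Finset.sum_sub_distrib,
      ← Finset.mul_sum, sum_val_ite (fun j => r j) 0 (by omega), hsr]
  have EA : ∀ (m : ℕ) (hm1 : 1 ≤ m) (hm2 : m + 2 ≤ k),
      ∑ j, r j * (zval (⟨m, by omega⟩ : Fin (k+1)) (t j) : ℚ)
        = (if m = 1 then 2 else 1) * s m - s (m+1) := by
    intro m hm1 hm2
    have hpt : ∀ j : Fin (k+2), r j * (zval (⟨m, by omega⟩ : Fin (k+1)) (t j) : ℚ)
        = (if j.val = m then (if m = 1 then (2:ℚ) else 1) * r j else 0)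
          - (if j.val = m+1 then r j else 0) := by
      intro j; rw [hq]; obtain ⟨jv, hj⟩ := j
      simp only [Fin.val_mk, eq_self_iff_true, true_or, or_true, true_and, and_true]
      split_ifs <;> first | ring1 | (exfalso; omega)
    rw [Finset.sum_congr rfl (fun j _ => hpt j), Finset.sum_sub_distrib,
      sum_val_ite (fun j => (if m = 1 then (2:ℚ) else 1) * r j) m (by omega),
      sum_val_ite (fun j => r j) (m+1) (by omega), hsr, hsr]
  have EB : ∑ j, r j * (zval (⟨k-1, by omega⟩ : Fin (k+1)) (t j) : ℚ)
      = s (k-1) - s k - s (k+1) := by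
    have hpt : ∀ j : Fin (k+2), r j * (zval (⟨k-1, by omega⟩ : Fin (k+1)) (t j) : ℚ)
        = ((if j.val = k-1 then r j else 0) - (if j.val = k then r j else 0))
          - (if j.val = k+1 then r j else 0) := by
      intro j; rw [hq]; obtain ⟨jv, hj⟩ := j
      simp only [Fin.val_mk, eq_self_iff_true, true_or, or_true, true_and, and_true]
      split_ifs <;> first | ring1 | (exfalso; omega)
    rw [Finset.sum_congr rfl (fun j _ => hpt j), Finset.sum_sub_distrib,
      Finset.sum_sub_distrib,
      sum_val_ite (fun j => r j) (k-1) (by omega),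
      sum_val_ite (fun j => r j) k (by omega),
      sum_val_ite (fun j => r j) (k+1) (by omega), hsr, hsr, hsr]
  have EC : ∑ j, r j * (zval (⟨k, by omega⟩ : Fin (k+1)) (t j) : ℚ)
      = s k - s (k+1) := by
    have hpt : ∀ j : Fin (k+2), r j * (zval (⟨k, by omega⟩ : Fin (k+1)) (t j) : ℚ)
        = (if j.val = k then r j else 0) - (if j.val = k+1 then r j else 0) := by
      intro j; rw [hq]; obtain ⟨jv, hj⟩ := j
      simp only [Fin.val_mk, eq_self_iff_true, true_or, or_true, true_and, and_true]
      split_ifs <;> first | ring1 | (exfalso; omega)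
    rw [Finset.sum_congr rfl (fun j _ => hpt j), Finset.sum_sub_distrib,
      sum_val_ite (fun j => r j) k (by omega),
      sum_val_ite (fun j => r j) (k+1) (by omega), hsr, hsr]
  have hkQ : (3:ℚ) ≤ (k:ℚ) := by exact_mod_cast hk
  have h2k : (2*(k:ℚ)) ≠ 0 := by positivity
  have hnQ : (n:ℚ) = 2*(k:ℚ) := by rw [hnk]; push_cast; ring
  have hcast : ((k-2 : ℕ) : ℚ) = (k:ℚ) - 2 := by
    rw [Nat.cast_sub (by omega)]; norm_num
  constructor
  · rintro ⟨hz, hs⟩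
    have h0 : 2*(k:ℚ)*(s 0) - 1 = 0 := by
      rw [← hs, ← E0]; exact hz _
    have hr0 : s 0 = 1/(2*(k:ℚ)) := by
      rw [eq_div_iff h2k]; linarith
    have hA : ∀ (m : ℕ) (h1 : 1 ≤ m) (h2 : m + 2 ≤ k),
        (if m = 1 then (2:ℚ) else 1) * s m = s (m+1) := by
      intro m h1 h2
      have := hz ⟨m, by omega⟩
      rw [EA m h1 h2] at this
      linarith
    have hC : s k = s (k+1) := by
      have := hz ⟨k, by omega⟩
      rw [EC] at this; linarith
    have hB : s (k-1) = s k + s (k+1) := by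
      have := hz ⟨k-1, by omega⟩
      rw [EB] at this; linarith
    have hmid : ∀ m : ℕ, 2 ≤ m → m ≤ k-1 → s m = 2 * s 1 := by
      intro m
      induction m with
      | zero => intro h _; exact absurd h (by omega)
      | succ p ih =>
        intro h2 h3
        rcases Nat.eq_or_lt_of_le h2 with he | hlt
        · have hp : p = 1 := by omega
          subst hp
          have := hA 1 le_rfl (by omega)
          rw [if_pos rfl] at this
          exact this.symm
        · have := hA p (by omega) (by omega)
          rw [if_neg (by omega), one_mul] at this
          rw [← this, ih (by omega) (by omega)]
    have h1k : s k = s 1 := by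
      have hm := hmid (k-1) (by omega) (by omega)
      linarith
    have hsumr : (1:ℚ) = (s 0 - s 1)
        + ((k-2:ℕ) * (2 * s 1) + 4 * s 1) := by
      have hpt : ∀ j : Fin (k+2), r j =
          (if j.val = 0 then s 0 - s 1 else 0)
          + (if 2 ≤ j.val ∧ j.val ≤ k-1 then 2 * s 1 else s 1) := by
        intro j
        obtain ⟨jv, hj⟩ := j
        rw [hsr jv hj]
        simp only [Fin.val_mk]
        rcases Nat.lt_or_ge jv 2 with h2 | h2
        · interval_cases jv
          · rw [if_pos rfl, if_neg (by omega)]; ring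
          · rw [if_neg (by omega), if_neg (by omega), zero_add]
        · rcases Nat.lt_or_ge jv k with h3 | h3
          · rw [if_neg (by omega), if_pos (by omega), zero_add]
            exact hmid jv h2 (by omega)
          · have hor : jv = k ∨ jv = k+1 := by omega
            rw [if_neg (by omega), if_neg (by omega), zero_add]
            rcases hor with h | h <;> subst h
            · exact h1k
            · rw [← hC]; exact h1k
      rw [← hs, Finset.sum_congr rfl (fun j _ => hpt j), Finset.sum_add_distrib,
        sum_val_ite (fun _ => s 0 - s 1) 0 (by omega),
        sum_shape k hk]
    have hr1 : s 1 = 1/(2*(k:ℚ)) := by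
      rw [hcast, hr0] at hsumr
      have h2k1 : (2*(k:ℚ)-1) ≠ 0 := by
        intro h; rw [sub_eq_zero] at h; linarith
      have he : (2*(k:ℚ)-1) * s 1 = (2*(k:ℚ)-1) * (1/(2*(k:ℚ))) := by
        rw [mul_one_div, eq_div_iff h2k]
        field_simp at hsumr
        linarith
      exact mul_left_cancel₀ h2k1 he
    intro j
    obtain ⟨jv, hj⟩ := j
    rw [hsr jv hj]
    simp only [Fin.val_mk]
    rcases Nat.lt_or_ge jv 2 with h2 | h2
    · rw [if_neg (by omega)]
      interval_cases jv
      · rw [hr0, hnQ]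
      · rw [hr1, hnQ]
    · rcases Nat.lt_or_ge jv k with h3 | h3
      · rw [if_pos (by omega), hmid jv h2 (by omega), hr1, hnQ]; ring
      · rw [if_neg (by omega)]
        have hor : jv = k ∨ jv = k+1 := by omega
        rcases hor with h | h <;> subst h
        · rw [h1k, hr1, hnQ]
        · rw [← hC, h1k, hr1, hnQ]
  · intro hr
    have hsv : ∀ m : ℕ, m < k + 2 →
        s m = if 2 ≤ m ∧ m ≤ k - 1 then 2 / (n : ℚ) else 1 / (n : ℚ) := by
      intro m h
      rw [← hsr m h, hr ⟨m, h⟩]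
    have hn0 : (n:ℚ) ≠ 0 := by rw [hnQ]; positivity
    have hsum1 : ∑ j, r j = 1 := by
      rw [Finset.sum_congr rfl (fun j _ => hr j), sum_shape k hk, hcast, hnQ]
      field_simp
      ring
    refine ⟨?_, hsum1⟩
    intro i
    obtain ⟨iv, hi⟩ := i
    rcases Nat.lt_or_ge iv 1 with h1 | h1
    · have hiv : iv = 0 := by omega
      subst hiv
      rw [E0, hsum1, hsv 0 (by omega)]
      rw [if_neg (by omega), hnQ]
      field_simp
      norm_num
    · rcases Nat.lt_or_ge iv (k-1) with h2 | h2
      · rw [EA iv h1 (by omega), hsv iv (by omega), hsv (iv+1) (by omega)]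
        rcases Nat.eq_or_lt_of_le h1 with he | hlt
        · rw [if_pos (by omega), if_neg (by omega), if_pos (by omega)]
          ring
        · rw [if_neg (by omega), if_pos (by omega), if_pos (by omega)]
          ring
      · rcases Nat.lt_or_ge iv k with h3 | h3
        · have hiv : iv = k - 1 := by omega
          subst hiv
          rw [EB, hsv (k-1) (by omega), hsv k (by omega), hsv (k+1) (by omega)]
          rw [if_pos (by omega), if_neg (by omega), if_neg (by omega)]
          ring
        · have hie : (⟨iv, hi⟩ : Fin (k+1)) = ⟨k, by omega⟩ := by
            simp only [Fin.mk.injEq]; omega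
          rw [hie, EC, hsv k (by omega), hsv (k+1) (by omega)]
          rw [if_neg (by omega), if_neg (by omega)]
          ring
end Part1b
section Assemblies

lemma Assembly.tileOf_eq_sum {m : ℕ} {G : Multigraph} (A : Assembly m G) (v : G.V) :
    A.tileOf v = ∑ e : G.E,
      ((if (A.orient e).1 = v then {Sum.inl (A.label e)} else 0) +
       (if (A.orient e).2 = v then {Sum.inr (A.label e)} else 0)) := by
  rfl

lemma Assembly.count_tileOf {m : ℕ} {G : Multigraph} (A : Assembly m G) (v : G.V)
    (x : Fin m ⊕ Fin m) :
    Multiset.count x (A.tileOf v) = ∑ e : G.E,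
      ((if (A.orient e).1 = v then (if x = Sum.inl (A.label e) then 1 else 0) else 0) +
       (if (A.orient e).2 = v then (if x = Sum.inr (A.label e) then 1 else 0) else 0)) := by
  rw [A.tileOf_eq_sum v]
  rw [Multiset.count_sum']
  refine Finset.sum_congr rfl (fun e _ => ?_)
  rw [Multiset.count_add]
  congr 1 <;> split_ifs <;> simp_all [Multiset.count_singleton]

lemma Assembly.conservation {m : ℕ} {G : Multigraph} (A : Assembly m G) (i : Fin m) :
    ∑ v : G.V, zval i (A.tileOf v) = 0 := by
  have h : ∀ v, zval i (A.tileOf v) =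
      ∑ e : G.E, (((if (A.orient e).1 = v then (if (Sum.inl i : Fin m ⊕ Fin m) = Sum.inl (A.label e) then (1:ℤ) else 0) else 0))
        - ((if (A.orient e).2 = v then (if (Sum.inr i : Fin m ⊕ Fin m) = Sum.inr (A.label e) then (1:ℤ) else 0) else 0))) := by
    intro v
    rw [zval, A.count_tileOf v (Sum.inl i), A.count_tileOf v (Sum.inr i)]
    push_cast
    rw [← Finset.sum_sub_distrib]
    refine Finset.sum_congr rfl (fun e _ => ?_)
    split_ifs <;> simp_all
  rw [Finset.sum_congr rfl (fun v _ => h v), Finset.sum_comm]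
  refine Finset.sum_eq_zero (fun e _ => ?_)
  rw [Finset.sum_sub_distrib, Finset.sum_ite_eq, Finset.sum_ite_eq]
  simp

end Assemblies
section UpperBound

instance wheelDecEqOpt (N : ℕ) (a : (wheel N).V) (b : Option (Fin (N-1))) : Decidable (a = b) :=
  Multigraph.decEqV (wheel N) a b

def wnxt {n : ℕ} (i : Fin (n-1)) : Fin (n-1) :=
  ⟨(i.val + 1) % (n - 1), Nat.mod_lt _ (by have := i.isLt; omega)⟩

lemma wnxt_val {n : ℕ} (i : Fin (n-1)) :
    (wnxt i).val = if i.val + 1 = n - 1 then 0 else i.val + 1 := by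
  show (i.val + 1) % (n-1) = _
  split_ifs with h
  · rw [h]; exact Nat.mod_self _
  · exact Nat.mod_eq_of_lt (by have := i.isLt; omega)

def wheelAssembly (n k : ℕ) (hk : 3 ≤ k) (hnk : n = 2 * k) :
    Assembly (k+1) (wheel n) where
  orient e :=
    match e with
    | Sum.inl i => (none, some i)
    | Sum.inr i =>
        if i.val < k then (some i, some (wnxt i)) else (some (wnxt i), some i)
  label e :=
    match e with
    | Sum.inl _ => ⟨0, by lia⟩
    | Sum.inr i =>
        if h : i.val < k then ⟨i.val + 1, by omega⟩
        else ⟨2*k - 1 - i.val, by omega⟩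
  orient_ends e := by
    cases e with
    | inl i => rfl
    | inr i =>
      dsimp only
      by_cases h : i.val < k
      · rw [if_pos h]; rfl
      · rw [if_neg h]
        exact Sym2.eq_swap

variable {n k : ℕ} (hk : 3 ≤ k) (hnk : n = 2 * k)

lemma wA_orient_inl (i : Fin (n-1)) :
    (wheelAssembly n k hk hnk).orient (Sum.inl i) = (none, some i) := rfl

lemma wA_label_inl (i : Fin (n-1)) :
    (wheelAssembly n k hk hnk).label (Sum.inl i) = ⟨0, by lia⟩ := rfl

lemma wA_orient_inr_lt (i : Fin (n-1)) (h : i.val < k) :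
    (wheelAssembly n k hk hnk).orient (Sum.inr i) = (some i, some (wnxt i)) := by
  show (if i.val < k then (some i, some (wnxt i)) else (some (wnxt i), some i)) = _
  rw [if_pos h]

lemma wA_orient_inr_ge (i : Fin (n-1)) (h : ¬ i.val < k) :
    (wheelAssembly n k hk hnk).orient (Sum.inr i) = (some (wnxt i), some i) := by
  show (if i.val < k then (some i, some (wnxt i)) else (some (wnxt i), some i)) = _
  rw [if_neg h]

lemma wA_label_inr_lt (i : Fin (n-1)) (h : i.val < k) :
    (wheelAssembly n k hk hnk).label (Sum.inr i) = ⟨i.val + 1, by omega⟩ := by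
  show (if h : i.val < k then (⟨i.val + 1, by omega⟩ : Fin (k+1))
    else ⟨2*k - 1 - i.val, by omega⟩) = _
  rw [dif_pos h]

lemma wA_label_inr_ge (i : Fin (n-1)) (h : ¬ i.val < k) :
    (wheelAssembly n k hk hnk).label (Sum.inr i) = ⟨2*k - 1 - i.val, by omega⟩ := by
  show (if h : i.val < k then (⟨i.val + 1, by omega⟩ : Fin (k+1))
    else ⟨2*k - 1 - i.val, by omega⟩) = _
  rw [dif_neg h]

lemma add3_congr {X : Type*} {a b c a' b' c' : Multiset X}
    (h1 : a = a') (h2 : b = b') (h3 : c = c') :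
    a + (b + c) = a' + (b' + c') := by rw [h1, h2, h3]

lemma Fterm_lt_fst (i j : Fin (n-1)) (h : i.val < k) (hij : i = j)
    (hnx : ¬ (wnxt i) = j) :
    ((if ((wheelAssembly n k hk hnk).orient (Sum.inr i)).1 = some j
        then ({Sum.inl ((wheelAssembly n k hk hnk).label (Sum.inr i))} :
          Multiset (Fin (k+1) ⊕ Fin (k+1))) else 0)
      + (if ((wheelAssembly n k hk hnk).orient (Sum.inr i)).2 = some j
        then {Sum.inr ((wheelAssembly n k hk hnk).label (Sum.inr i))} else 0))
    = {Sum.inl (⟨i.val + 1, by omega⟩ : Fin (k+1))} := by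
  rw [wA_orient_inr_lt hk hnk i h, wA_label_inr_lt hk hnk i h]
  dsimp only
  erw [if_pos (congrArg some hij),
    if_neg (fun hcon => hnx (Option.some.inj hcon)), add_zero]

lemma Fterm_lt_snd (i j : Fin (n-1)) (h : i.val < k) (hij : ¬ i = j)
    (hnx : (wnxt i) = j) :
    ((if ((wheelAssembly n k hk hnk).orient (Sum.inr i)).1 = some j
        then ({Sum.inl ((wheelAssembly n k hk hnk).label (Sum.inr i))} :
          Multiset (Fin (k+1) ⊕ Fin (k+1))) else 0)
      + (if ((wheelAssembly n k hk hnk).orient (Sum.inr i)).2 = some j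
        then {Sum.inr ((wheelAssembly n k hk hnk).label (Sum.inr i))} else 0))
    = {Sum.inr (⟨i.val + 1, by omega⟩ : Fin (k+1))} := by
  rw [wA_orient_inr_lt hk hnk i h, wA_label_inr_lt hk hnk i h]
  dsimp only
  erw [if_neg (fun hcon => hij (Option.some.inj hcon)),
    if_pos (congrArg some hnx), zero_add]

lemma Fterm_ge_fst (i j : Fin (n-1)) (h : ¬ i.val < k) (hij : ¬ i = j)
    (hnx : (wnxt i) = j) :
    ((if ((wheelAssembly n k hk hnk).orient (Sum.inr i)).1 = some j
        then ({Sum.inl ((wheelAssembly n k hk hnk).label (Sum.inr i))} :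
          Multiset (Fin (k+1) ⊕ Fin (k+1))) else 0)
      + (if ((wheelAssembly n k hk hnk).orient (Sum.inr i)).2 = some j
        then {Sum.inr ((wheelAssembly n k hk hnk).label (Sum.inr i))} else 0))
    = {Sum.inl (⟨2*k - 1 - i.val, by omega⟩ : Fin (k+1))} := by
  rw [wA_orient_inr_ge hk hnk i h, wA_label_inr_ge hk hnk i h]
  dsimp only
  erw [if_pos (congrArg some hnx),
    if_neg (fun hcon => hij (Option.some.inj hcon)), add_zero]

lemma Fterm_ge_snd (i j : Fin (n-1)) (h : ¬ i.val < k) (hij : i = j)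
    (hnx : ¬ (wnxt i) = j) :
    ((if ((wheelAssembly n k hk hnk).orient (Sum.inr i)).1 = some j
        then ({Sum.inl ((wheelAssembly n k hk hnk).label (Sum.inr i))} :
          Multiset (Fin (k+1) ⊕ Fin (k+1))) else 0)
      + (if ((wheelAssembly n k hk hnk).orient (Sum.inr i)).2 = some j
        then {Sum.inr ((wheelAssembly n k hk hnk).label (Sum.inr i))} else 0))
    = {Sum.inr (⟨2*k - 1 - i.val, by omega⟩ : Fin (k+1))} := by
  rw [wA_orient_inr_ge hk hnk i h, wA_label_inr_ge hk hnk i h]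
  dsimp only
  erw [if_neg (fun hcon => hnx (Option.some.inj hcon)),
    if_pos (congrArg some hij), zero_add]

lemma sum_wheelE (n : ℕ) {M : Type*} [AddCommMonoid M] (f : (wheel n).E → M) :
    ∑ e : (wheel n).E, f e
      = ∑ i : Fin (n-1), f (Sum.inl i) + ∑ i : Fin (n-1), f (Sum.inr i) :=
  Fintype.sum_sum_type f

end UpperBound
section RealizesWheel

set_option maxHeartbeats 1600000 in
lemma realizes_wheel {n k : ℕ} (hk : 3 ≤ k) (hnk : n = 2 * k)
    {t : Fin (k + 2) → Tile (k + 1)}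
    (ht0 : t 0 = Multiset.replicate (n - 1) (Sum.inl ⟨0, by lia⟩))
    (ht1 : t 1 = ({Sum.inr ⟨0, by lia⟩, Sum.inl ⟨1, by lia⟩,
      Sum.inl ⟨1, by lia⟩} : Tile (k + 1)))
    (hti : ∀ (j : Fin (k + 2)) (h2 : 2 ≤ j.val) (hjk : j.val ≤ k),
      t j = ({Sum.inr ⟨0, by lia⟩,
        Sum.inr ⟨j.val - 1, by have := j.isLt; lia⟩,
        Sum.inl ⟨j.val, by have := hjk; lia⟩} : Tile (k + 1)))
    (htlast : t ⟨k + 1, by lia⟩ = ({Sum.inr ⟨0, by lia⟩,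
      Sum.inr ⟨k - 1, by lia⟩, Sum.inr ⟨k, by lia⟩} : Tile (k + 1))) :
    Realizes (Finset.image t Finset.univ) (wheel n) := by
  refine ⟨wheelAssembly n k hk hnk, ?_⟩
  have hn6 : 6 ≤ n := by omega
  -- the sum over spoke edges, for an outer vertex
  have spoke : ∀ j : Fin (n-1),
      (∑ i : Fin (n-1),
        ((if ((wheelAssembly n k hk hnk).orient (Sum.inl i)).1 = some j
            then ({Sum.inl ((wheelAssembly n k hk hnk).label (Sum.inl i))} :
              Multiset (Fin (k+1) ⊕ Fin (k+1))) else 0)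
          + (if ((wheelAssembly n k hk hnk).orient (Sum.inl i)).2 = some j
            then {Sum.inr ((wheelAssembly n k hk hnk).label (Sum.inl i))} else 0)))
      = {Sum.inr (⟨0, by omega⟩ : Fin (k+1))} := by
    intro j
    have hpt : ∀ i : Fin (n-1),
        ((if ((wheelAssembly n k hk hnk).orient (Sum.inl i)).1 = some j
            then ({Sum.inl ((wheelAssembly n k hk hnk).label (Sum.inl i))} :
              Multiset (Fin (k+1) ⊕ Fin (k+1))) else 0)
          + (if ((wheelAssembly n k hk hnk).orient (Sum.inl i)).2 = some j
            then {Sum.inr ((wheelAssembly n k hk hnk).label (Sum.inl i))} else 0))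
        = (if i = j then ({Sum.inr (⟨0, by omega⟩ : Fin (k+1))} :
            Multiset (Fin (k+1) ⊕ Fin (k+1))) else 0) := by
      intro i
      rw [wA_orient_inl hk hnk, wA_label_inl hk hnk]
      rw [if_neg (by simp), zero_add]
      by_cases h : i = j
      · rw [if_pos (by rw [h]), if_pos h]
      · erw [if_neg (fun hcon => h (Option.some.inj hcon)), if_neg h]
    rw [Finset.sum_congr rfl (fun i _ => hpt i), Finset.sum_ite_eq' Finset.univ j]
    simp
  -- the sum over cycle edges, for an outer vertex
  have cyc : ∀ j : Fin (n-1),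
      (∑ i : Fin (n-1),
        ((if ((wheelAssembly n k hk hnk).orient (Sum.inr i)).1 = some j
            then ({Sum.inl ((wheelAssembly n k hk hnk).label (Sum.inr i))} :
              Multiset (Fin (k+1) ⊕ Fin (k+1))) else 0)
          + (if ((wheelAssembly n k hk hnk).orient (Sum.inr i)).2 = some j
            then {Sum.inr ((wheelAssembly n k hk hnk).label (Sum.inr i))} else 0)))
      = (((if ((wheelAssembly n k hk hnk).orient
            (Sum.inr (⟨if j.val = 0 then n-2 else j.val - 1, by split_ifs <;> omega⟩ : Fin (n-1)))).1 = some j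
            then ({Sum.inl ((wheelAssembly n k hk hnk).label
              (Sum.inr (⟨if j.val = 0 then n-2 else j.val - 1, by split_ifs <;> omega⟩ : Fin (n-1))))} :
              Multiset (Fin (k+1) ⊕ Fin (k+1))) else 0)
          + (if ((wheelAssembly n k hk hnk).orient
            (Sum.inr (⟨if j.val = 0 then n-2 else j.val - 1, by split_ifs <;> omega⟩ : Fin (n-1)))).2 = some j
            then {Sum.inr ((wheelAssembly n k hk hnk).label
              (Sum.inr (⟨if j.val = 0 then n-2 else j.val - 1, by split_ifs <;> omega⟩ : Fin (n-1))))} else 0))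
        + ((if ((wheelAssembly n k hk hnk).orient (Sum.inr j)).1 = some j
            then ({Sum.inl ((wheelAssembly n k hk hnk).label (Sum.inr j))} :
              Multiset (Fin (k+1) ⊕ Fin (k+1))) else 0)
          + (if ((wheelAssembly n k hk hnk).orient (Sum.inr j)).2 = some j
            then {Sum.inr ((wheelAssembly n k hk hnk).label (Sum.inr j))} else 0))) := by
    intro j
    refine Finset.sum_eq_add (⟨if j.val = 0 then n-2 else j.val - 1, by split_ifs <;> omega⟩ : Fin (n-1)) j
      ?_ ?_ (fun hh => absurd (Finset.mem_univ _) hh) (fun hh => absurd (Finset.mem_univ _) hh)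
    · intro hcon
      have := congrArg Fin.val hcon
      simp only [Fin.val_mk] at this
      split_ifs at this <;> omega
    · intro c _ hc
      obtain ⟨hcp, hcj⟩ := hc
      have hcp' : ¬ (c.val = if j.val = 0 then n-2 else j.val - 1) := by
        intro h; exact hcp (Fin.ext (by simpa using h))
      have hcj' : ¬ (c.val = j.val) := by
        intro h; exact hcj (Fin.ext h)
      have hwc := wnxt_val c
      have hclt := c.isLt
      by_cases hj0 : j.val = 0
      · rw [if_pos hj0] at hcp'
        by_cases h : c.val < k
        · rw [wA_orient_inr_lt hk hnk c h]
          erw [if_neg (fun hcon => hcj' (congrArg Fin.val (Option.some.inj hcon))),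
            if_neg ?_, add_zero]
          intro hcon
          have : (wnxt c).val = j.val := congrArg Fin.val (Option.some.inj hcon)
          rw [hwc] at this
          split_ifs at this <;> omega
        · rw [wA_orient_inr_ge hk hnk c h]
          erw [if_neg ?_, if_neg (fun hcon => hcj' (congrArg Fin.val (Option.some.inj hcon))),
            add_zero]
          intro hcon
          have : (wnxt c).val = j.val := congrArg Fin.val (Option.some.inj hcon)
          rw [hwc] at this
          split_ifs at this <;> omega
      · rw [if_neg hj0] at hcp'
        by_cases h : c.val < k
        · rw [wA_orient_inr_lt hk hnk c h]
          erw [if_neg (fun hcon => hcj' (congrArg Fin.val (Option.some.inj hcon))),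
            if_neg ?_, add_zero]
          intro hcon
          have : (wnxt c).val = j.val := congrArg Fin.val (Option.some.inj hcon)
          rw [hwc] at this
          split_ifs at this <;> omega
        · rw [wA_orient_inr_ge hk hnk c h]
          erw [if_neg ?_, if_neg (fun hcon => hcj' (congrArg Fin.val (Option.some.inj hcon))),
            add_zero]
          intro hcon
          have : (wnxt c).val = j.val := congrArg Fin.val (Option.some.inj hcon)
          rw [hwc] at this
          split_ifs at this <;> omega
  intro v
  rw [Finset.mem_image]
  cases v with
  | none =>
    refine ⟨0, Finset.mem_univ _, ?_⟩
    have key : (wheelAssembly n k hk hnk).tileOf none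
        = Multiset.replicate (n - 1) (Sum.inl (⟨0, by omega⟩ : Fin (k+1))) := by
      erw [Assembly.tileOf_eq_sum, sum_wheelE]
      have h1 : (∑ i : Fin (n-1),
          ((if ((wheelAssembly n k hk hnk).orient (Sum.inl i)).1 = none
              then ({Sum.inl ((wheelAssembly n k hk hnk).label (Sum.inl i))} :
                Multiset (Fin (k+1) ⊕ Fin (k+1))) else 0)
            + (if ((wheelAssembly n k hk hnk).orient (Sum.inl i)).2 = none
              then {Sum.inr ((wheelAssembly n k hk hnk).label (Sum.inl i))} else 0)))
          = Multiset.replicate (n - 1) (Sum.inl (⟨0, by omega⟩ : Fin (k+1))) := by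
        have hpt : ∀ i : Fin (n-1),
            ((if ((wheelAssembly n k hk hnk).orient (Sum.inl i)).1 = none
              then ({Sum.inl ((wheelAssembly n k hk hnk).label (Sum.inl i))} :
                Multiset (Fin (k+1) ⊕ Fin (k+1))) else 0)
            + (if ((wheelAssembly n k hk hnk).orient (Sum.inl i)).2 = none
              then {Sum.inr ((wheelAssembly n k hk hnk).label (Sum.inl i))} else 0))
            = ({Sum.inl (⟨0, by omega⟩ : Fin (k+1))} :
                Multiset (Fin (k+1) ⊕ Fin (k+1))) := by
          intro i
          rw [wA_orient_inl hk hnk, wA_label_inl hk hnk]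
          rw [if_pos rfl, if_neg (by simp), add_zero]
        rw [Finset.sum_congr rfl (fun i _ => hpt i), Finset.sum_const,
          Finset.card_univ, Fintype.card_fin, Multiset.nsmul_singleton]
      have h2 : (∑ i : Fin (n-1),
          ((if ((wheelAssembly n k hk hnk).orient (Sum.inr i)).1 = none
              then ({Sum.inl ((wheelAssembly n k hk hnk).label (Sum.inr i))} :
                Multiset (Fin (k+1) ⊕ Fin (k+1))) else 0)
            + (if ((wheelAssembly n k hk hnk).orient (Sum.inr i)).2 = none
              then {Sum.inr ((wheelAssembly n k hk hnk).label (Sum.inr i))} else 0)))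
          = 0 := by
        refine Finset.sum_eq_zero (fun i _ => ?_)
        by_cases h : i.val < k
        · rw [wA_orient_inr_lt hk hnk i h]; simp
        · rw [wA_orient_inr_ge hk hnk i h]; simp
      rw [h1, h2, add_zero]
    rw [key, ht0]
  | some j =>
    have hjlt := j.isLt
    have hwj := wnxt_val j
    rcases Nat.lt_or_ge j.val 1 with hj0' | hj1
    · -- j.val = 0 : tile t 1
      have hj0 : j.val = 0 := by omega
      refine ⟨1, Finset.mem_univ _, ?_⟩
      have key : (wheelAssembly n k hk hnk).tileOf (some j)
          = ({Sum.inr ⟨0, by omega⟩, Sum.inl ⟨1, by omega⟩,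
              Sum.inl ⟨1, by omega⟩} : Tile (k + 1)) := by
        erw [Assembly.tileOf_eq_sum, sum_wheelE, spoke j, cyc j]
        have hprev : (⟨if j.val = 0 then n-2 else j.val - 1,
            by split_ifs <;> omega⟩ : Fin (n-1)) = ⟨n-2, by omega⟩ :=
          Fin.ext (by simp only [Fin.val_mk]; rw [if_pos hj0])
        rw [hprev]
        have hq : ¬ ((⟨n-2, by omega⟩ : Fin (n-1)).val < k) := by
          simp only [Fin.val_mk]; omega
        have hjk : j.val < k := by omega
        have hFq := Fterm_ge_fst hk hnk (⟨n-2, by omega⟩ : Fin (n-1)) j hq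
          (fun hcon => by
            have := congrArg Fin.val hcon
            simp only [Fin.val_mk] at this; omega)
          (Fin.ext (by rw [wnxt_val]; simp only [Fin.val_mk]; split_ifs <;> omega))
        have hFj := Fterm_lt_fst hk hnk j j hjk rfl
          (fun hcon => by
            have := congrArg Fin.val hcon
            rw [hwj] at this
            split_ifs at this <;> omega)
        refine Eq.trans (add3_congr rfl hFq hFj) ?_
        have e1 : (⟨2*k - 1 - (⟨n-2, by omega⟩ : Fin (n-1)).val, by omega⟩ : Fin (k+1))
            = ⟨1, by omega⟩ := Fin.ext (by simp only [Fin.val_mk]; omega)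
        have e2 : (⟨j.val + 1, by omega⟩ : Fin (k+1)) = ⟨1, by omega⟩ :=
          Fin.ext (by simp only [Fin.val_mk]; omega)
        rw [e1, e2]
        simp only [Multiset.insert_eq_cons, Multiset.singleton_add]
      rw [ht1, key]
    · rcases Nat.lt_or_ge j.val k with hjk2 | hjk3
      · -- 1 ≤ j.val ≤ k-1 : tile t (j.val + 1)
        refine ⟨⟨j.val + 1, by omega⟩, Finset.mem_univ _, ?_⟩
        have key : (wheelAssembly n k hk hnk).tileOf (some j)
            = ({Sum.inr ⟨0, by omega⟩, Sum.inr ⟨j.val, by omega⟩,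
                Sum.inl ⟨j.val + 1, by omega⟩} : Tile (k + 1)) := by
          erw [Assembly.tileOf_eq_sum, sum_wheelE, spoke j, cyc j]
          have hprev : (⟨if j.val = 0 then n-2 else j.val - 1,
              by split_ifs <;> omega⟩ : Fin (n-1)) = ⟨j.val - 1, by omega⟩ :=
            Fin.ext (by simp only [Fin.val_mk]; rw [if_neg (by omega)])
          rw [hprev]
          have hp : ((⟨j.val - 1, by omega⟩ : Fin (n-1)).val < k) := by
            simp only [Fin.val_mk]; omega
          have hFp := Fterm_lt_snd hk hnk (⟨j.val - 1, by omega⟩ : Fin (n-1)) j hp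
            (fun hcon => by
              have := congrArg Fin.val hcon
              simp only [Fin.val_mk] at this; omega)
            (Fin.ext (by rw [wnxt_val]; simp only [Fin.val_mk]; split_ifs <;> omega))
          have hFj := Fterm_lt_fst hk hnk j j hjk2 rfl
            (fun hcon => by
              have := congrArg Fin.val hcon
              rw [hwj] at this
              split_ifs at this <;> omega)
          refine Eq.trans (add3_congr rfl hFp hFj) ?_
          have e1 : (⟨(⟨j.val - 1, by omega⟩ : Fin (n-1)).val + 1, by omega⟩ : Fin (k+1))
              = ⟨j.val, by omega⟩ := Fin.ext (by simp only [Fin.val_mk]; omega)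
          rw [e1]
          simp only [Multiset.insert_eq_cons, Multiset.singleton_add]
        rw [hti ⟨j.val + 1, by omega⟩ (by simp only [Fin.val_mk]; omega)
          (by simp only [Fin.val_mk]; omega), key]
        rfl
      · rcases Nat.lt_or_ge j.val (k+1) with hjk4 | hjk5
        · -- j.val = k : tile t (k+1)
          have hjv : j.val = k := by omega
          refine ⟨⟨k + 1, by omega⟩, Finset.mem_univ _, ?_⟩
          have key : (wheelAssembly n k hk hnk).tileOf (some j)
              = ({Sum.inr ⟨0, by omega⟩, Sum.inr ⟨k, by omega⟩,
                  Sum.inr ⟨k - 1, by omega⟩} : Tile (k + 1)) := by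
            erw [Assembly.tileOf_eq_sum, sum_wheelE, spoke j, cyc j]
            have hprev : (⟨if j.val = 0 then n-2 else j.val - 1,
                by split_ifs <;> omega⟩ : Fin (n-1)) = ⟨k - 1, by omega⟩ :=
              Fin.ext (by simp only [Fin.val_mk]; rw [if_neg (by omega)]; omega)
            rw [hprev]
            have hp : ((⟨k - 1, by omega⟩ : Fin (n-1)).val < k) := by
              simp only [Fin.val_mk]; omega
            have hjq : ¬ (j.val < k) := by omega
            have hFp := Fterm_lt_snd hk hnk (⟨k - 1, by omega⟩ : Fin (n-1)) j hp
              (fun hcon => by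
                have := congrArg Fin.val hcon
                simp only [Fin.val_mk] at this; omega)
              (Fin.ext (by rw [wnxt_val]; simp only [Fin.val_mk]; split_ifs <;> omega))
            have hFj := Fterm_ge_snd hk hnk j j hjq rfl
              (fun hcon => by
                have := congrArg Fin.val hcon
                rw [hwj] at this
                split_ifs at this <;> omega)
            refine Eq.trans (add3_congr rfl hFp hFj) ?_
            have e1 : (⟨(⟨k - 1, by omega⟩ : Fin (n-1)).val + 1, by omega⟩ : Fin (k+1))
                = ⟨k, by omega⟩ := Fin.ext (by simp only [Fin.val_mk]; omega)
            have e2 : (⟨2*k - 1 - j.val, by omega⟩ : Fin (k+1))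
                = ⟨k - 1, by omega⟩ := Fin.ext (by simp only [Fin.val_mk]; omega)
            rw [e1, e2]
            simp only [Multiset.insert_eq_cons, Multiset.singleton_add]
          rw [htlast, key]
          exact congrArg _ (Multiset.cons_swap _ _ _)
        · -- k+1 ≤ j.val ≤ 2k-2 : tile t (2k - j.val)
          refine ⟨⟨2*k - j.val, by omega⟩, Finset.mem_univ _, ?_⟩
          have key : (wheelAssembly n k hk hnk).tileOf (some j)
              = ({Sum.inr ⟨0, by omega⟩, Sum.inl ⟨2*k - j.val, by omega⟩,
                  Sum.inr ⟨2*k - j.val - 1, by omega⟩} : Tile (k + 1)) := by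
            erw [Assembly.tileOf_eq_sum, sum_wheelE, spoke j, cyc j]
            have hprev : (⟨if j.val = 0 then n-2 else j.val - 1,
                by split_ifs <;> omega⟩ : Fin (n-1)) = ⟨j.val - 1, by omega⟩ :=
              Fin.ext (by simp only [Fin.val_mk]; rw [if_neg (by omega)])
            rw [hprev]
            have hp : ¬ ((⟨j.val - 1, by omega⟩ : Fin (n-1)).val < k) := by
              simp only [Fin.val_mk]; omega
            have hjq : ¬ (j.val < k) := by omega
            have hFp := Fterm_ge_fst hk hnk (⟨j.val - 1, by omega⟩ : Fin (n-1)) j hp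
              (fun hcon => by
                have := congrArg Fin.val hcon
                simp only [Fin.val_mk] at this; omega)
              (Fin.ext (by rw [wnxt_val]; simp only [Fin.val_mk]; split_ifs <;> omega))
            have hFj := Fterm_ge_snd hk hnk j j hjq rfl
              (fun hcon => by
                have := congrArg Fin.val hcon
                rw [hwj] at this
                split_ifs at this <;> omega)
            refine Eq.trans (add3_congr rfl hFp hFj) ?_
            have e1 : (⟨2*k - 1 - (⟨j.val - 1, by omega⟩ : Fin (n-1)).val, by omega⟩
                : Fin (k+1)) = ⟨2*k - j.val, by omega⟩ :=
              Fin.ext (by simp only [Fin.val_mk]; omega)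
            have e2 : (⟨2*k - 1 - j.val, by omega⟩ : Fin (k+1))
                = ⟨2*k - j.val - 1, by omega⟩ := Fin.ext (by simp only [Fin.val_mk]; omega)
            rw [e1, e2]
            simp only [Multiset.insert_eq_cons, Multiset.singleton_add]
          rw [hti ⟨2*k - j.val, by omega⟩ (by simp only [Fin.val_mk]; omega)
            (by simp only [Fin.val_mk]; omega), key]
          exact congrArg _ (Multiset.cons_swap _ _ _)

end RealizesWheel
section LowerBound

lemma lower_bound {n k : ℕ} (hk : 3 ≤ k) (hnk : n = 2 * k)
    {t : Fin (k + 2) → Tile (k + 1)}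
    (ht0 : t 0 = Multiset.replicate (n - 1) (Sum.inl ⟨0, by lia⟩))
    (ht1 : t 1 = ({Sum.inr ⟨0, by lia⟩, Sum.inl ⟨1, by lia⟩,
      Sum.inl ⟨1, by lia⟩} : Tile (k + 1)))
    (hti : ∀ (j : Fin (k + 2)) (h2 : 2 ≤ j.val) (hjk : j.val ≤ k),
      t j = ({Sum.inr ⟨0, by lia⟩,
        Sum.inr ⟨j.val - 1, by have := j.isLt; lia⟩,
        Sum.inl ⟨j.val, by have := hjk; lia⟩} : Tile (k + 1)))
    (htlast : t ⟨k + 1, by lia⟩ = ({Sum.inr ⟨0, by lia⟩,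
      Sum.inr ⟨k - 1, by lia⟩, Sum.inr ⟨k, by lia⟩} : Tile (k + 1)))
    (G : Multigraph) (hG : Realizes (Finset.image t Finset.univ) G) :
    n ≤ G.order := by
  obtain ⟨A, hA⟩ := hG
  have hchoice : ∀ v : G.V, ∃ j : Fin (k+2), t j = A.tileOf v := by
    intro v
    obtain ⟨j, _, hj⟩ := Finset.mem_image.mp (hA v)
    exact ⟨j, hj⟩
  choose φ hφ using hchoice
  set N := Fintype.card G.V with hN_def
  have hN : 0 < N := Fintype.card_pos
  set c : Fin (k+2) → ℕ := fun j => (Finset.univ.filter (fun v => φ v = j)).card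
    with hc_def
  have hcsum : ∑ j, c j = N := by
    rw [hN_def, ← Finset.card_univ,
      Finset.card_eq_sum_card_fiberwise (fun x _ => Finset.mem_univ (φ x))]
  have hzero : ∀ i : Fin (k+1), ∑ j, (c j : ℤ) * zval i (t j) = 0 := by
    intro i
    calc ∑ j, (c j : ℤ) * zval i (t j)
        = ∑ j : Fin (k+2), ∑ v ∈ Finset.univ.filter (fun v => φ v = j),
            zval i (A.tileOf v) := by
          refine Finset.sum_congr rfl (fun j _ => ?_)
          rw [Finset.sum_congr rfl
            (fun v hv => by rw [← hφ v, (Finset.mem_filter.mp hv).2] :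
              ∀ v ∈ Finset.univ.filter (fun v => φ v = j),
                zval i (A.tileOf v) = zval i (t j)),
            Finset.sum_const, nsmul_eq_mul]
      _ = ∑ v, zval i (A.tileOf v) :=
          Finset.sum_fiberwise_of_maps_to (fun v _ => Finset.mem_univ _) _
      _ = 0 := A.conservation i
  have hNQ : ((N : ℚ)) ≠ 0 := by
    simp only [ne_eq, Nat.cast_eq_zero]
    omega
  set r : Fin (k+2) → ℚ := fun j => (c j : ℚ) / (N : ℚ) with hr_def
  have hsum : ∑ j, r j = 1 := by
    rw [hr_def, ← Finset.sum_div]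
    rw [show (∑ j, (c j : ℚ)) = ((∑ j, c j : ℕ) : ℚ) by push_cast; rfl, hcsum]
    exact div_self hNQ
  have heqs : ∀ i : Fin (k+1), ∑ j, r j * (zval i (t j) : ℚ) = 0 := by
    intro i
    have h1 : ((∑ j, (c j : ℤ) * zval i (t j) : ℤ) : ℚ) = 0 := by
      rw [hzero i]; norm_num
    push_cast at h1
    rw [hr_def]
    have : ∀ j : Fin (k+2), (c j : ℚ) / (N:ℚ) * (zval i (t j) : ℚ)
        = ((c j : ℚ) * (zval i (t j) : ℚ)) / (N:ℚ) := by
      intro j; ring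
    rw [Finset.sum_congr rfl (fun j _ => this j), ← Finset.sum_div, h1, zero_div]
  have hval := (part1 hk hnk ht0 ht1 hti htlast r).mp ⟨heqs, hsum⟩ 0
  have h0val : r 0 = 1 / (n : ℚ) := by
    rw [hval]
    norm_num
  have hnQ0 : ((n:ℚ)) ≠ 0 := by
    simp only [ne_eq, Nat.cast_eq_zero]
    omega
  have hc0 : (c 0 : ℚ) * n = N := by
    rw [hr_def] at h0val
    field_simp at h0val
    linarith
  have hc0' : c 0 * n = N := by exact_mod_cast hc0
  have hc0pos : 1 ≤ c 0 := by
    by_contra h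
    have : c 0 = 0 := by omega
    rw [this] at hc0'
    omega
  calc n = 1 * n := (one_mul n).symm
    _ ≤ c 0 * n := Nat.mul_le_mul_right n hc0pos
    _ = N := hc0'

end LowerBound
section Final

lemma wheel_order {n : ℕ} (hn : 1 ≤ n) : (wheel n).order = n := by
  rw [Multigraph.order]
  have h : Fintype.card (wheel n).V = Fintype.card (Option (Fin (n-1))) :=
    Fintype.card_congr (Equiv.refl _)
  rw [h, Fintype.card_option, Fintype.card_fin]
  omega

lemma mP_eq {n k : ℕ} (hk : 3 ≤ k) (hnk : n = 2 * k)
    {t : Fin (k + 2) → Tile (k + 1)}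
    (ht0 : t 0 = Multiset.replicate (n - 1) (Sum.inl ⟨0, by lia⟩))
    (ht1 : t 1 = ({Sum.inr ⟨0, by lia⟩, Sum.inl ⟨1, by lia⟩,
      Sum.inl ⟨1, by lia⟩} : Tile (k + 1)))
    (hti : ∀ (j : Fin (k + 2)) (h2 : 2 ≤ j.val) (hjk : j.val ≤ k),
      t j = ({Sum.inr ⟨0, by lia⟩,
        Sum.inr ⟨j.val - 1, by have := j.isLt; lia⟩,
        Sum.inl ⟨j.val, by have := hjk; lia⟩} : Tile (k + 1)))
    (htlast : t ⟨k + 1, by lia⟩ = ({Sum.inr ⟨0, by lia⟩,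
      Sum.inr ⟨k - 1, by lia⟩, Sum.inr ⟨k, by lia⟩} : Tile (k + 1))) :
    mP (Finset.image t Finset.univ) = n := by
  have hmem : n ∈ {N | ∃ G ∈ CSet (Finset.image t Finset.univ), G.order = N} :=
    ⟨wheel n, realizes_wheel hk hnk ht0 ht1 hti htlast, wheel_order (by omega)⟩
  apply le_antisymm
  · exact Nat.sInf_le hmem
  · have hmin := Nat.sInf_mem (⟨n, hmem⟩ :
      Set.Nonempty {N | ∃ G ∈ CSet (Finset.image t Finset.univ), G.order = N})
    obtain ⟨G, hG, hord⟩ := hmin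
    calc n ≤ G.order := lower_bound hk hnk ht0 ht1 hti htlast G hG
      _ = _ := hord

end Final
/-- For even `n = 2k ≥ 6`, the pot `P_even` (with `k+1 = n/2+1` bond-edge types
and `k+2 = n/2+2` tiles `t₁ = {a₁^{n-1}}`, `t₂ = {â₁, a₂, a₂}`,
`tᵢ = {â₁, â_{i-1}, aᵢ}` for `3 ≤ i ≤ n/2+1`, and
`t_{n/2+2} = {â₁, â_{n/2}, â_{n/2+1}}`; here `0`-indexed) has construction
matrix with unique solution `(1/n, 1/n, 2/n, …, 2/n, 1/n, 1/n)` (the entry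
`2/n` in `1`-indexed coordinates `3` through `n/2`), and consequently
`m_{P_even} = n`. -/
theorem scenario3_even_pot_matrix (n k : ℕ) (hk : 3 ≤ k) (hnk : n = 2 * k)
    (t : Fin (k + 2) → Tile (k + 1))
    (ht0 : t 0 = Multiset.replicate (n - 1) (Sum.inl ⟨0, by omega⟩))
    (ht1 : t 1 = ({Sum.inr ⟨0, by omega⟩, Sum.inl ⟨1, by omega⟩,
      Sum.inl ⟨1, by omega⟩} : Tile (k + 1)))
    (hti : ∀ (j : Fin (k + 2)) (h2 : 2 ≤ j.val) (hjk : j.val ≤ k),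
      t j = ({Sum.inr ⟨0, by omega⟩,
        Sum.inr ⟨j.val - 1, by have := j.isLt; omega⟩,
        Sum.inl ⟨j.val, by have := hjk; omega⟩} : Tile (k + 1)))
    (htlast : t ⟨k + 1, by omega⟩ = ({Sum.inr ⟨0, by omega⟩,
      Sum.inr ⟨k - 1, by omega⟩, Sum.inr ⟨k, by omega⟩} : Tile (k + 1))) :
    (∀ r : Fin (k + 2) → ℚ,
        ((∀ i : Fin (k + 1), ∑ j, r j * (zval i (t j) : ℚ) = 0) ∧ ∑ j, r j = 1) ↔
          ∀ j : Fin (k + 2), r j =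
            if 2 ≤ j.val ∧ j.val ≤ k - 1 then 2 / (n : ℚ) else 1 / (n : ℚ)) ∧
    mP (Finset.image t Finset.univ) = n := by
  exact ⟨fun r => part1 hk hnk ht0 ht1 hti htlast r, mP_eq hk hnk ht0 ht1 hti htlast⟩
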